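/- Let d ≥ 1 be an integer, let q : (0,∞) × ℝ^d × ℝ^d → [0,∞) be measurable, let b : ℝ^d → [0,∞) be measurable, and let t > 0. Then for every n ≥ 1 and every x ∈ ℝ^d, the iterated integral over the ordered simplex ∫_{0 ≤ s₁ < s₂ < ⋯ < s_n ≤ t} ∫_{(ℝ^d)^n} b(y₁)⋯b(y_n) · q(s₁, x, y₁) · ∏_{j=2}^n q(s_j − s_{j−1}, y_{j−1}, y_j) dy₁⋯dy_n ds₁⋯ds_n is at most α_n · (√t · Λ_t(b))^n. -/

import Mathlib

open MeasureTheory Real Set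
open scoped ENNReal

/-- The constants `α_n`, with `α_0 = α_1 = 1` and
`α_n = ∏_{k=2}^n (1 - 1/k)^{(k-1)/2} k^{-1/2}` for `n ≥ 2`. -/
noncomputable def alphaConst (n : ℕ) : ℝ :=
  ∏ k ∈ Finset.Icc 2 n, ((1 - 1 / (k : ℝ)) ^ (((k : ℝ) - 1) / 2) * (k : ℝ) ^ (-(1 : ℝ) / 2))

/-- `Λ_t(b) = sup_x ∫_0^t ∫ s^{-1/2} q(s,x,y) b(y) dy ds` (valued in `[0,∞]`). -/
noncomputable def lambdaQ (d : ℕ)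
    (q : ℝ → EuclideanSpace ℝ (Fin d) → EuclideanSpace ℝ (Fin d) → ℝ)
    (t : ℝ) (b : EuclideanSpace ℝ (Fin d) → ℝ) : ℝ≥0∞ :=
  ⨆ x : EuclideanSpace ℝ (Fin d), ∫⁻ s in Set.Ioc (0 : ℝ) t,
    ∫⁻ y, ENNReal.ofReal (s ^ (-(1 : ℝ) / 2) * q s x y * b y)



lemma alphaConst_nonneg (n : ℕ) : 0 ≤ alphaConst n := by
  refine Finset.prod_nonneg fun k hk => ?_
  have hk2 : (2 : ℕ) ≤ k := (Finset.mem_Icc.1 hk).1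
  have h0 : (1:ℝ) ≤ (k:ℝ) := by exact_mod_cast Nat.one_le_of_lt hk2
  have h1 : (0:ℝ) ≤ 1 - 1 / (k:ℝ) := by
    have h2 : 1 / (k:ℝ) ≤ 1 := by
      rw [div_le_one (by linarith)]; exact h0
    linarith
  exact mul_nonneg (Real.rpow_nonneg h1 _) (Real.rpow_nonneg (by positivity) _)

lemma alphaConst_succ (n : ℕ) :
    alphaConst (n+1) = alphaConst n *
      ((1 - 1/((n:ℝ)+1)) ^ (((n:ℝ)+1-1)/2) * ((n:ℝ)+1) ^ (-(1:ℝ)/2)) := by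
  rcases Nat.eq_zero_or_pos n with rfl | hn
  · norm_num [alphaConst, Real.one_rpow, Real.rpow_zero]
  · have h2 : 2 ≤ n + 1 := by omega
    unfold alphaConst
    rw [Finset.prod_Icc_succ_top h2]
    push_cast
    rfl

lemma sqrt_amgm (n : ℕ) {τ s : ℝ} (hs : 0 < s) (hsτ : s ≤ τ) :
    Real.sqrt (τ - s) ^ n * Real.sqrt s
      ≤ (1 - 1/((n:ℝ)+1)) ^ (((n:ℝ)+1-1)/2) * ((n:ℝ)+1) ^ (-(1:ℝ)/2) * Real.sqrt τ ^ (n+1) := by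
  have hτ0 : 0 < τ := lt_of_lt_of_le hs hsτ
  have ha : 0 ≤ τ - s := by linarith
  rcases Nat.eq_zero_or_pos n with rfl | hn
  · norm_num
    exact Real.sqrt_le_sqrt hsτ
  · have hn' : 0 < (n:ℝ) := by exact_mod_cast hn
    have hm : 0 < (n:ℝ)+1 := by positivity
    have hw : (n:ℝ)/((n:ℝ)+1) + 1/((n:ℝ)+1) = 1 := by field_simp
    have hgm := Real.geom_mean_le_arith_mean2_weighted
      (by positivity : (0:ℝ) ≤ (n:ℝ)/((n:ℝ)+1)) (by positivity : (0:ℝ) ≤ 1/((n:ℝ)+1))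
      (by positivity : (0:ℝ) ≤ (τ-s)*((n:ℝ)+1)/(n:ℝ)) (by positivity : (0:ℝ) ≤ s*((n:ℝ)+1)) hw
    have hsum : (n:ℝ)/((n:ℝ)+1)*((τ-s)*((n:ℝ)+1)/(n:ℝ)) + 1/((n:ℝ)+1)*(s*((n:ℝ)+1)) = τ := by
      field_simp
      try ring
    rw [hsum] at hgm
    have h2 := Real.rpow_le_rpow (by positivity) hgm (by positivity : (0:ℝ) ≤ ((n:ℝ)+1)/2)
    have e1 : (((τ-s)*((n:ℝ)+1)/(n:ℝ)) ^ ((n:ℝ)/((n:ℝ)+1)) * (s*((n:ℝ)+1)) ^ ((1:ℝ)/((n:ℝ)+1)))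
          ^ (((n:ℝ)+1)/2)
        = ((τ-s) ^ ((n:ℝ)/2) * (((n:ℝ)+1)/(n:ℝ)) ^ ((n:ℝ)/2))
            * (s ^ ((1:ℝ)/2) * ((n:ℝ)+1) ^ ((1:ℝ)/2)) := by
      have hA : (0:ℝ) ≤ (τ-s)*((n:ℝ)+1)/(n:ℝ) := by positivity
      have hB : (0:ℝ) ≤ s*((n:ℝ)+1) := by positivity
      have hC : (0:ℝ) ≤ ((τ-s)*((n:ℝ)+1)/(n:ℝ)) ^ ((n:ℝ)/((n:ℝ)+1)) := Real.rpow_nonneg hA _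
      have hD : (0:ℝ) ≤ (s*((n:ℝ)+1)) ^ ((1:ℝ)/((n:ℝ)+1)) := Real.rpow_nonneg hB _
      rw [Real.mul_rpow hC hD]
      rw [← Real.rpow_mul hA ((n:ℝ)/((n:ℝ)+1)) (((n:ℝ)+1)/2)]
      rw [← Real.rpow_mul hB ((1:ℝ)/((n:ℝ)+1)) (((n:ℝ)+1)/2)]
      have e2 : (n:ℝ)/((n:ℝ)+1)*(((n:ℝ)+1)/2) = (n:ℝ)/2 := by field_simp; try ring
      have e3 : (1:ℝ)/((n:ℝ)+1)*(((n:ℝ)+1)/2) = 1/2 := by field_simp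
      rw [e2, e3]
      rw [show (τ-s)*((n:ℝ)+1)/(n:ℝ) = (τ-s)*(((n:ℝ)+1)/(n:ℝ)) by ring]
      rw [Real.mul_rpow ha (by positivity)]
      rw [Real.mul_rpow hs.le hm.le]
    rw [e1] at h2
    have hP : (0:ℝ) < ((((n:ℝ)+1))/(n:ℝ)) ^ ((n:ℝ)/2) := Real.rpow_pos_of_pos (by positivity) _
    have hQ : (0:ℝ) < ((n:ℝ)+1) ^ ((1:ℝ)/2) := Real.rpow_pos_of_pos hm _
    have key : (τ-s) ^ ((n:ℝ)/2) * s ^ ((1:ℝ)/2)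
        ≤ ((n:ℝ)/((n:ℝ)+1)) ^ ((n:ℝ)/2) * ((n:ℝ)+1) ^ (-(1:ℝ)/2) * τ ^ (((n:ℝ)+1)/2) := by
      have h3 := mul_le_mul_of_nonneg_right h2
        (by positivity :
          (0:ℝ) ≤ ((((n:ℝ)+1)/(n:ℝ)) ^ ((n:ℝ)/2))⁻¹ * (((n:ℝ)+1) ^ ((1:ℝ)/2))⁻¹)
      calc (τ-s) ^ ((n:ℝ)/2) * s ^ ((1:ℝ)/2)
          = ((τ-s) ^ ((n:ℝ)/2) * (((n:ℝ)+1)/(n:ℝ)) ^ ((n:ℝ)/2))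
              * (s ^ ((1:ℝ)/2) * ((n:ℝ)+1) ^ ((1:ℝ)/2))
              * (((((n:ℝ)+1)/(n:ℝ)) ^ ((n:ℝ)/2))⁻¹ * (((n:ℝ)+1) ^ ((1:ℝ)/2))⁻¹) := by
            field_simp
        _ ≤ τ ^ (((n:ℝ)+1)/2)
              * (((((n:ℝ)+1)/(n:ℝ)) ^ ((n:ℝ)/2))⁻¹ * (((n:ℝ)+1) ^ ((1:ℝ)/2))⁻¹) := h3
        _ = ((n:ℝ)/((n:ℝ)+1)) ^ ((n:ℝ)/2) * ((n:ℝ)+1) ^ (-(1:ℝ)/2) * τ ^ (((n:ℝ)+1)/2) := by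
            rw [show (n:ℝ)/((n:ℝ)+1) = (((n:ℝ)+1)/(n:ℝ))⁻¹ by rw [inv_div]]
            rw [Real.inv_rpow (by positivity)]
            rw [show (-(1:ℝ)/2) = -(1/2:ℝ) by norm_num, Real.rpow_neg hm.le]
            ring
    have hL : Real.sqrt (τ - s) ^ n * Real.sqrt s = (τ-s) ^ ((n:ℝ)/2) * s ^ ((1:ℝ)/2) := by
      rw [Real.sqrt_eq_rpow, Real.sqrt_eq_rpow, ← Real.rpow_natCast ((τ-s) ^ ((1:ℝ)/2)) n,
        ← Real.rpow_mul ha]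
      ring_nf
    have hR : Real.sqrt τ ^ (n+1) = τ ^ (((n:ℝ)+1)/2) := by
      rw [Real.sqrt_eq_rpow, ← Real.rpow_natCast (τ ^ ((1:ℝ)/2)) (n+1), ← Real.rpow_mul hτ0.le]
      push_cast
      ring_nf
    have h1m : 1 - 1/((n:ℝ)+1) = (n:ℝ)/((n:ℝ)+1) := by field_simp; ring
    have hexp : ((n:ℝ)+1-1)/2 = (n:ℝ)/2 := by ring
    rw [hL, hR, h1m, hexp]
    exact key

section Core
variable {α : Type*} [MeasureSpace α] [SigmaFinite (volume : Measure α)]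

lemma lintegral_fin_cons {n : ℕ}
    {G : (Fin (n+1) → α) → ℝ≥0∞} (hG : Measurable G) :
    ∫⁻ f, G f = ∫⁻ a : α, ∫⁻ g : Fin n → α, G (Fin.cons a g) := by
  have h := (measurePreserving_piFinSuccAbove (fun _ : Fin (n+1) => (volume : Measure α)) 0)
  simp only [volume_pi]
  rw [← MeasurePreserving.lintegral_comp h.symm hG]
  rw [MeasureTheory.lintegral_prod _ (by
    exact (hG.comp (MeasurableEquiv.piFinSuccAbove (fun _ => α) 0).symm.measurable).aemeasurable)]
  congr 1
  ext a
  congr 1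
  ext g
  have : (MeasurableEquiv.piFinSuccAbove (fun _ => α) 0).symm (a, g)
      = Fin.insertNth 0 a g := rfl
  rw [this, Fin.insertNth_zero']

variable (q : ℝ → α → α → ℝ) (b : α → ℝ)

/-- The product integrand. -/
noncomputable def Pfun (n : ℕ) (x : α) (s : Fin n → ℝ) (y : Fin n → α) : ℝ≥0∞ :=
  ∏ i : Fin n,
    ENNReal.ofReal (b (y i) *
      q ((Fin.cons 0 s : Fin (n + 1) → ℝ) i.succ
          - (Fin.cons 0 s : Fin (n + 1) → ℝ) i.castSucc)
        ((Fin.cons x y : Fin (n + 1) → α) i.castSucc) (y i))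

/-- The open ordered simplex. -/
def simplexSet (n : ℕ) (τ : ℝ) : Set (Fin n → ℝ) :=
  {u | StrictMono u ∧ ∀ i, u i ∈ Set.Ioc 0 τ}

/-- The iterated integral. -/
noncomputable def Jfun (n : ℕ) (τ : ℝ) (x : α) : ℝ≥0∞ :=
  ∫⁻ s in simplexSet n τ, ∫⁻ y : Fin n → α, Pfun q b n x s y

lemma measurable_cons_apply {β : Type*} [MeasurableSpace β] (c : β) {n : ℕ} (j : Fin (n + 1)) :
    Measurable fun s : Fin n → β => (Fin.cons c s : Fin (n+1) → β) j := by
  refine Fin.cases ?_ ?_ j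
  · simpa using measurable_const
  · intro k; simpa using measurable_pi_apply k

lemma measurable_cons_apply2 {β : Type*} [MeasurableSpace β] {n : ℕ} (j : Fin (n + 1)) :
    Measurable fun p : β × (Fin n → β) => (Fin.cons p.1 p.2 : Fin (n+1) → β) j := by
  refine Fin.cases ?_ ?_ j
  · simpa using measurable_fst
  · intro k; simpa [Function.comp_def] using (measurable_pi_apply k).comp measurable_snd

variable {q b}

lemma measurable_Pfun (hqm : Measurable fun p : ℝ × α × α => q p.1 p.2.1 p.2.2)
    (hbm : Measurable b) (n : ℕ) :
    Measurable fun p : α × (Fin n → ℝ) × (Fin n → α) => Pfun q b n p.1 p.2.1 p.2.2 := by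
  unfold Pfun
  refine Finset.measurable_prod _ fun i _ => ?_
  have hy : Measurable fun p : α × (Fin n → ℝ) × (Fin n → α) => p.2.2 i :=
    (measurable_pi_apply i).comp (measurable_snd.comp measurable_snd)
  have hts : Measurable fun p : α × (Fin n → ℝ) × (Fin n → α) =>
      (Fin.cons 0 p.2.1 : Fin (n+1) → ℝ) i.succ
        - (Fin.cons 0 p.2.1 : Fin (n+1) → ℝ) i.castSucc :=
    ((measurable_cons_apply (0:ℝ) i.succ).comp (measurable_fst.comp measurable_snd)).sub
      ((measurable_cons_apply (0:ℝ) i.castSucc).comp (measurable_fst.comp measurable_snd))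
  have hsp : Measurable fun p : α × (Fin n → ℝ) × (Fin n → α) =>
      (Fin.cons p.1 p.2.2 : Fin (n+1) → α) i.castSucc :=
    (measurable_cons_apply2 i.castSucc).comp
      (measurable_fst.prodMk (measurable_snd.comp measurable_snd))
  exact ENNReal.measurable_ofReal.comp
    ((hbm.comp hy).mul (hqm.comp (hts.prodMk (hsp.prodMk hy))))

lemma measurableSet_simplexSet (n : ℕ) (τ : ℝ) : MeasurableSet (simplexSet n τ) := by
  have h1 : {u : Fin n → ℝ | StrictMono u}
      = ⋂ (i : Fin n) (j : Fin n) (_ : i < j), {u : Fin n → ℝ | u i < u j} := by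
    ext u
    simp only [Set.mem_setOf_eq, Set.mem_iInter]
    exact ⟨fun h i j hij => h hij, fun h a c hac => h a c hac⟩
  have h2 : simplexSet n τ
      = {u : Fin n → ℝ | StrictMono u} ∩ ⋂ i, {u : Fin n → ℝ | u i ∈ Set.Ioc 0 τ} := by
    ext u; simp [simplexSet]
  rw [h2, h1]
  exact (MeasurableSet.iInter fun i => MeasurableSet.iInter fun j => MeasurableSet.iInter fun _ =>
      measurableSet_lt (measurable_pi_apply i) (measurable_pi_apply j)).inter
    (MeasurableSet.iInter fun i => (measurable_pi_apply i) measurableSet_Ioc)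

lemma cons_shift {n : ℕ} (s₀ : ℝ) (u : Fin n → ℝ) :
    (Fin.cons s₀ (fun i => u i + s₀) : Fin (n+1) → ℝ)
      = fun i => (Fin.cons 0 u : Fin (n+1) → ℝ) i + s₀ := by
  funext i
  refine Fin.cases ?_ ?_ i <;> simp

lemma Pfun_cons (n : ℕ) (x y₀ : α) (s₀ : ℝ) (u : Fin n → ℝ) (y : Fin n → α) :
    Pfun q b (n+1) x (Fin.cons s₀ (fun i => u i + s₀)) (Fin.cons y₀ y)
      = ENNReal.ofReal (b y₀ * q s₀ x y₀) * Pfun q b n y₀ u y := by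
  unfold Pfun
  rw [Fin.prod_univ_succ]
  congr 1
  · simp
  · refine Finset.prod_congr rfl fun j _ => ?_
    have hsucc : ((j.succ : Fin (n+1)).succ : Fin (n+2)) = Fin.succ j.succ := rfl
    have h1 : (Fin.cons (0:ℝ) (Fin.cons s₀ (fun i => u i + s₀)) : Fin (n+2) → ℝ) j.succ.succ
        = u j + s₀ := by
      rw [hsucc, Fin.cons_succ, Fin.cons_succ]
    have h2 : (Fin.cons (0:ℝ) (Fin.cons s₀ (fun i => u i + s₀)) : Fin (n+2) → ℝ)
          (j.succ.castSucc)
        = (Fin.cons (0:ℝ) u : Fin (n+1) → ℝ) j.castSucc + s₀ := by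
      rw [← Fin.succ_castSucc, Fin.cons_succ, cons_shift]
    have h3 : (Fin.cons x (Fin.cons y₀ y) : Fin (n+2) → α) (j.succ.castSucc)
        = (Fin.cons y₀ y : Fin (n+1) → α) j.castSucc := by
      rw [← Fin.succ_castSucc, Fin.cons_succ]
    rw [h1, h2, h3, Fin.cons_succ, Fin.cons_succ]
    congr 2
    ring

lemma cons_mem_simplexSet_iff {n : ℕ} {t s₀ : ℝ} (hs₀ : s₀ ∈ Set.Ioc 0 t) (u : Fin n → ℝ) :
    ((Fin.cons s₀ (fun i => u i + s₀) : Fin (n+1) → ℝ) ∈ simplexSet (n+1) t)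
      ↔ u ∈ simplexSet n (t - s₀) := by
  constructor
  · rintro ⟨hsm, hmem⟩
    constructor
    · intro a c hac
      have := hsm (show (a.succ : Fin (n+1)) < c.succ from Fin.succ_lt_succ_iff.2 hac)
      simpa using this
    · intro i
      constructor
      · have := hsm (Fin.succ_pos i)
        simp only [Fin.cons_zero, Fin.cons_succ] at this
        linarith
      · have := (hmem i.succ).2
        simp only [Fin.cons_succ] at this
        linarith
  · rintro ⟨hsm, hmem⟩
    constructor
    · intro a c hac
      rcases Fin.eq_zero_or_eq_succ c with rfl | ⟨jc, rfl⟩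
      · exact absurd hac (by simp)
      · rcases Fin.eq_zero_or_eq_succ a with rfl | ⟨ja, rfl⟩
        · simp only [Fin.cons_zero, Fin.cons_succ]
          have := (hmem jc).1
          linarith
        · simp only [Fin.cons_succ]
          have hlt : ja < jc := Fin.succ_lt_succ_iff.1 hac
          have := hsm hlt
          linarith
    · intro i
      rcases Fin.eq_zero_or_eq_succ i with rfl | ⟨j, rfl⟩
      · simpa using hs₀
      · simp only [Fin.cons_succ]
        have h1 := (hmem j).1
        have h2 := (hmem j).2
        constructor <;> [linarith [hs₀.1]; linarith]

set_option maxHeartbeats 1000000 in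
lemma Jfun_succ (hqm : Measurable fun p : ℝ × α × α => q p.1 p.2.1 p.2.2)
    (hbm : Measurable b) (n : ℕ) (t : ℝ) (x : α) :
    Jfun q b (n+1) t x
      = ∫⁻ s₀ in Set.Ioc 0 t,
          ∫⁻ y₀, ENNReal.ofReal (b y₀ * q s₀ x y₀) * Jfun q b n (t - s₀) y₀ := by
  have hP := fun m => measurable_Pfun hqm hbm (α := α) m
  have hQ : Measurable fun s : Fin (n+1) → ℝ =>
      ∫⁻ y : Fin (n+1) → α, Pfun q b (n+1) x s y := by
    apply Measurable.lintegral_prod_right'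
      (f := fun p : (Fin (n+1) → ℝ) × (Fin (n+1) → α) => Pfun q b (n+1) x p.1 p.2)
    exact (hP (n+1)).comp (measurable_const.prodMk (measurable_fst.prodMk measurable_snd))
  have hSm := measurableSet_simplexSet (n+1) t
  have hG : Measurable fun s : Fin (n+1) → ℝ =>
      (simplexSet (n+1) t).indicator
        (fun s => ∫⁻ y : Fin (n+1) → α, Pfun q b (n+1) x s y) s := hQ.indicator hSm
  unfold Jfun
  rw [← lintegral_indicator hSm, lintegral_fin_cons hG, ← lintegral_indicator measurableSet_Ioc]
  refine lintegral_congr fun s₀ => ?_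
  by_cases hs₀ : s₀ ∈ Set.Ioc 0 t
  case neg =>
    rw [Set.indicator_of_notMem hs₀]
    have hnot : ∀ g : Fin n → ℝ, (Fin.cons s₀ g : Fin (n+1) → ℝ) ∉ simplexSet (n+1) t := by
      intro g hg
      exact hs₀ (by simpa using hg.2 0)
    simp only [Set.indicator_of_notMem (hnot _)]
    exact lintegral_zero
  case pos =>
    rw [Set.indicator_of_mem hs₀]
    have htrans : (∫⁻ g : Fin n → ℝ, (simplexSet (n+1) t).indicator
          (fun s => ∫⁻ y : Fin (n+1) → α, Pfun q b (n+1) x s y) (Fin.cons s₀ g))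
        = ∫⁻ u : Fin n → ℝ, (simplexSet (n+1) t).indicator
            (fun s => ∫⁻ y : Fin (n+1) → α, Pfun q b (n+1) x s y)
            (Fin.cons s₀ (fun i => u i + s₀)) := by
      have := lintegral_add_right_eq_self
        (μ := (volume : Measure (Fin n → ℝ)))
        (f := fun g : Fin n → ℝ => (simplexSet (n+1) t).indicator
          (fun s => ∫⁻ y : Fin (n+1) → α, Pfun q b (n+1) x s y) (Fin.cons s₀ g))
        (fun _ => s₀)
      rw [← this]
      exact lintegral_congr fun u => rfl
    rw [htrans]
    have hpoint : ∀ u : Fin n → ℝ,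
        (simplexSet (n+1) t).indicator
          (fun s => ∫⁻ y : Fin (n+1) → α, Pfun q b (n+1) x s y)
          (Fin.cons s₀ (fun i => u i + s₀))
        = (simplexSet n (t - s₀)).indicator
            (fun u => ∫⁻ y₀ : α, ENNReal.ofReal (b y₀ * q s₀ x y₀)
              * ∫⁻ y : Fin n → α, Pfun q b n y₀ u y) u := by
      intro u
      by_cases hu : u ∈ simplexSet n (t - s₀)
      · rw [Set.indicator_of_mem ((cons_mem_simplexSet_iff hs₀ u).2 hu),
          Set.indicator_of_mem hu]
        have hGy : Measurable fun yy : Fin (n+1) → α =>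
            Pfun q b (n+1) x (Fin.cons s₀ (fun i => u i + s₀)) yy :=
          (hP (n+1)).comp (measurable_const.prodMk (measurable_const.prodMk measurable_id))
        rw [lintegral_fin_cons hGy]
        refine lintegral_congr fun y₀ => ?_
        have : ∀ y : Fin n → α,
            Pfun q b (n+1) x (Fin.cons s₀ (fun i => u i + s₀)) (Fin.cons y₀ y)
              = ENNReal.ofReal (b y₀ * q s₀ x y₀) * Pfun q b n y₀ u y :=
          fun y => Pfun_cons n x y₀ s₀ u y
        simp only [this]
        exact lintegral_const_mul' _ _ ENNReal.ofReal_ne_top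
      · rw [Set.indicator_of_notMem hu, Set.indicator_of_notMem
          (fun hmem => hu ((cons_mem_simplexSet_iff hs₀ u).1 hmem))]
    simp only [hpoint]
    rw [lintegral_indicator (measurableSet_simplexSet n (t - s₀))]
    -- swap the u- and y₀- integrals
    have hK : Measurable fun p : (Fin n → ℝ) × α =>
        ∫⁻ y : Fin n → α, Pfun q b n p.2 p.1 y := by
      apply Measurable.lintegral_prod_right'
        (f := fun p : ((Fin n → ℝ) × α) × (Fin n → α) => Pfun q b n p.1.2 p.1.1 p.2)
      exact (hP n).comp ((measurable_snd.comp measurable_fst).prodMk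
        ((measurable_fst.comp measurable_fst).prodMk measurable_snd))
    have hc : Measurable fun y₀ : α => ENNReal.ofReal (b y₀ * q s₀ x y₀) :=
      ENNReal.measurable_ofReal.comp (hbm.mul (hqm.comp
        (measurable_const.prodMk (measurable_const.prodMk measurable_id))))
    rw [lintegral_lintegral_swap]
    · refine lintegral_congr fun y₀ => ?_
      rw [lintegral_const_mul' _ _ ENNReal.ofReal_ne_top]
    · exact ((hc.comp measurable_snd).mul
        (hK.comp (measurable_fst.prodMk measurable_snd))).aemeasurable

lemma Jfun_bound (hqm : Measurable fun p : ℝ × α × α => q p.1 p.2.1 p.2.2)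
    (hbm : Measurable b) {t : ℝ} (Λ : ℝ≥0∞)
    (hΛ : ∀ x : α, (∫⁻ s in Set.Ioc (0:ℝ) t,
        ∫⁻ y, ENNReal.ofReal (s ^ (-(1:ℝ)/2) * q s x y * b y)) ≤ Λ) :
    ∀ (n : ℕ) (τ : ℝ), 0 ≤ τ → τ ≤ t → ∀ x : α,
      Jfun q b n τ x
        ≤ ENNReal.ofReal (alphaConst n) * ENNReal.ofReal (Real.sqrt τ) ^ n * Λ ^ n := by
  intro n
  induction n with
  | zero =>
    intro τ hτ0 hτt x
    have huniv : (volume : Measure (Fin 0 → α)) Set.univ = 1 := by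
      rw [volume_pi, Measure.pi_univ]; simp
    have hunivR : (volume : Measure (Fin 0 → ℝ)) Set.univ = 1 := by
      rw [volume_pi, Measure.pi_univ]; simp
    calc Jfun q b 0 τ x = ∫⁻ _ in simplexSet 0 τ, (1:ℝ≥0∞) := by
          unfold Jfun Pfun
          simp [lintegral_one, huniv]
      _ = volume (simplexSet 0 τ) := setLIntegral_one _
      _ ≤ volume (Set.univ : Set (Fin 0 → ℝ)) := measure_mono (Set.subset_univ _)
      _ = 1 := hunivR
      _ = ENNReal.ofReal (alphaConst 0) * ENNReal.ofReal (Real.sqrt τ) ^ 0 * Λ ^ 0 := by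
          simp [alphaConst]
  | succ n ih =>
    intro τ hτ0 hτt x
    rw [Jfun_succ hqm hbm]
    have hαn := alphaConst_nonneg n
    set r : ℝ := (1 - 1/((n:ℝ)+1)) ^ (((n:ℝ)+1-1)/2) * ((n:ℝ)+1) ^ (-(1:ℝ)/2) with hr_def
    have hr0 : 0 ≤ r := by
      refine mul_nonneg (Real.rpow_nonneg ?_ _) (Real.rpow_nonneg (by positivity) _)
      have h1 : 1/((n:ℝ)+1) ≤ 1 := by
        rw [div_le_one (by positivity)]
        have : (0:ℝ) ≤ (n:ℝ) := Nat.cast_nonneg n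
        linarith
      linarith
    set C : ℝ≥0∞ := ENNReal.ofReal (alphaConst n) with hC_def
    set V : ℝ → ℝ≥0∞ := fun s₀ => ∫⁻ y₀, ENNReal.ofReal (b y₀ * q s₀ x y₀) with hV_def
    set W : ℝ → ℝ≥0∞ :=
      fun s₀ => ∫⁻ y₀, ENNReal.ofReal (s₀ ^ (-(1:ℝ)/2) * q s₀ x y₀ * b y₀) with hW_def
    set D : ℝ≥0∞ := C * ENNReal.ofReal r * ENNReal.ofReal (Real.sqrt τ) ^ (n+1) * Λ ^ n
      with hD_def
    have hcm : ∀ s₀ : ℝ, Measurable fun y₀ : α => ENNReal.ofReal (b y₀ * q s₀ x y₀) := by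
      intro s₀
      exact ENNReal.measurable_ofReal.comp (hbm.mul (hqm.comp
        (measurable_const.prodMk (measurable_const.prodMk measurable_id))))
    have step1 : (∫⁻ s₀ in Set.Ioc (0:ℝ) τ,
          ∫⁻ y₀, ENNReal.ofReal (b y₀ * q s₀ x y₀) * Jfun q b n (τ - s₀) y₀)
        ≤ ∫⁻ s₀ in Set.Ioc (0:ℝ) τ,
            (C * ENNReal.ofReal (Real.sqrt (τ - s₀)) ^ n * Λ ^ n) * V s₀ := by
      refine lintegral_mono_ae ?_
      rw [ae_restrict_iff' measurableSet_Ioc]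
      filter_upwards with s₀ hs₀
      have hb1 := ih (τ - s₀) (by linarith [hs₀.2]) (by linarith [hs₀.1, hτt])
      calc (∫⁻ y₀, ENNReal.ofReal (b y₀ * q s₀ x y₀) * Jfun q b n (τ - s₀) y₀)
          ≤ ∫⁻ y₀, ENNReal.ofReal (b y₀ * q s₀ x y₀) *
              (C * ENNReal.ofReal (Real.sqrt (τ - s₀)) ^ n * Λ ^ n) :=
            lintegral_mono fun y₀ => mul_le_mul_right (hb1 y₀) _
        _ = (C * ENNReal.ofReal (Real.sqrt (τ - s₀)) ^ n * Λ ^ n) * V s₀ := by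
            rw [hV_def, lintegral_mul_const _ (hcm s₀), mul_comm]
    have step2 : (∫⁻ s₀ in Set.Ioc (0:ℝ) τ,
          (C * ENNReal.ofReal (Real.sqrt (τ - s₀)) ^ n * Λ ^ n) * V s₀)
        ≤ ∫⁻ s₀ in Set.Ioc (0:ℝ) τ, D * W s₀ := by
      refine lintegral_mono_ae ?_
      rw [ae_restrict_iff' measurableSet_Ioc]
      filter_upwards with s₀ hs₀
      have hs0 : 0 < s₀ := hs₀.1
      have hss : s₀ ≤ τ := hs₀.2
      have hsqrtpos : 0 < Real.sqrt s₀ := Real.sqrt_pos.2 hs0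
      have hrs : s₀ ^ (-(1:ℝ)/2) = (Real.sqrt s₀)⁻¹ := by
        rw [Real.sqrt_eq_rpow, show (-(1:ℝ)/2) = -(1/2:ℝ) by norm_num,
          Real.rpow_neg hs0.le]
      have hkey : Real.sqrt (τ - s₀) ^ n ≤ r * Real.sqrt τ ^ (n+1) * s₀ ^ (-(1:ℝ)/2) := by
        have hgm := sqrt_amgm n hs0 hss
        calc Real.sqrt (τ - s₀) ^ n
            = (Real.sqrt (τ - s₀) ^ n * Real.sqrt s₀) / Real.sqrt s₀ := by
              field_simp
          _ ≤ (r * Real.sqrt τ ^ (n+1)) / Real.sqrt s₀ := by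
              gcongr
          _ = r * Real.sqrt τ ^ (n+1) * s₀ ^ (-(1:ℝ)/2) := by
              rw [hrs]; ring
      have hENN : ENNReal.ofReal (Real.sqrt (τ - s₀)) ^ n
          ≤ ENNReal.ofReal r * ENNReal.ofReal (Real.sqrt τ) ^ (n+1)
            * ENNReal.ofReal (s₀ ^ (-(1:ℝ)/2)) := by
        rw [← ENNReal.ofReal_pow (Real.sqrt_nonneg _), ← ENNReal.ofReal_pow (Real.sqrt_nonneg _),
          ← ENNReal.ofReal_mul hr0, ← ENNReal.ofReal_mul (by positivity)]
        exact ENNReal.ofReal_le_ofReal hkey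
      have hsplit : ENNReal.ofReal (s₀ ^ (-(1:ℝ)/2)) * V s₀ = W s₀ := by
        rw [hV_def, hW_def]
        simp only []
        rw [← lintegral_const_mul' _ _ ENNReal.ofReal_ne_top]
        refine lintegral_congr fun y₀ => ?_
        rw [← ENNReal.ofReal_mul (Real.rpow_nonneg hs0.le _)]
        congr 1
        ring
      calc (C * ENNReal.ofReal (Real.sqrt (τ - s₀)) ^ n * Λ ^ n) * V s₀
          ≤ (C * (ENNReal.ofReal r * ENNReal.ofReal (Real.sqrt τ) ^ (n+1)
              * ENNReal.ofReal (s₀ ^ (-(1:ℝ)/2))) * Λ ^ n) * V s₀ := by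
            exact mul_le_mul_left (mul_le_mul_left (mul_le_mul_right hENN C) _) _
        _ = D * (ENNReal.ofReal (s₀ ^ (-(1:ℝ)/2)) * V s₀) := by
            rw [hD_def]; ring
        _ = D * W s₀ := by rw [hsplit]
    have hWm : Measurable W := by
      rw [hW_def]
      apply Measurable.lintegral_prod_right'
        (f := fun p : ℝ × α => ENNReal.ofReal (p.1 ^ (-(1:ℝ)/2) * q p.1 x p.2 * b p.2))
      refine ENNReal.measurable_ofReal.comp ?_
      refine (((by fun_prop : Measurable fun p : ℝ × α => p.1 ^ (-(1:ℝ)/2))).mul (hqm.comp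
        (measurable_fst.prodMk (measurable_const.prodMk measurable_snd)))).mul
        (hbm.comp measurable_snd)
    have step3 : (∫⁻ s₀ in Set.Ioc (0:ℝ) τ, D * W s₀) ≤ D * Λ := by
      rw [lintegral_const_mul _ hWm]
      refine mul_le_mul_right ?_ D
      calc (∫⁻ s₀ in Set.Ioc (0:ℝ) τ, W s₀) ≤ ∫⁻ s₀ in Set.Ioc (0:ℝ) t, W s₀ :=
            lintegral_mono_set (Set.Ioc_subset_Ioc_right hτt)
        _ ≤ Λ := hΛ x
    have hfinal : D * Λ
        = ENNReal.ofReal (alphaConst (n+1)) * ENNReal.ofReal (Real.sqrt τ) ^ (n+1)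
          * Λ ^ (n+1) := by
      rw [alphaConst_succ n, ENNReal.ofReal_mul hαn, hD_def, hC_def, ← hr_def, pow_succ]
      ring
    calc (∫⁻ s₀ in Set.Ioc (0:ℝ) τ,
          ∫⁻ y₀, ENNReal.ofReal (b y₀ * q s₀ x y₀) * Jfun q b n (τ - s₀) y₀)
        ≤ ∫⁻ s₀ in Set.Ioc (0:ℝ) τ, D * W s₀ := le_trans step1 step2
      _ ≤ D * Λ := step3
      _ = _ := hfinal

end Core

theorem stmt1 (d : ℕ) (hd : 1 ≤ d)
    (q : ℝ → EuclideanSpace ℝ (Fin d) → EuclideanSpace ℝ (Fin d) → ℝ)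
    (hqm : Measurable fun p : ℝ × EuclideanSpace ℝ (Fin d) × EuclideanSpace ℝ (Fin d) =>
      q p.1 p.2.1 p.2.2)
    (hq0 : ∀ s x y, 0 ≤ q s x y)
    (b : EuclideanSpace ℝ (Fin d) → ℝ) (hbm : Measurable b) (hb0 : ∀ z, 0 ≤ b z)
    (t : ℝ) (ht : 0 < t) (n : ℕ) (hn : 1 ≤ n) (x : EuclideanSpace ℝ (Fin d)) :
    (∫⁻ s in {s : Fin n → ℝ | StrictMono s ∧ ∀ i, s i ∈ Set.Icc 0 t},
        ∫⁻ y : Fin n → EuclideanSpace ℝ (Fin d),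
          ∏ i : Fin n,
            ENNReal.ofReal (b (y i) *
              q ((Fin.cons 0 s : Fin (n + 1) → ℝ) i.succ
                  - (Fin.cons 0 s : Fin (n + 1) → ℝ) i.castSucc)
                ((Fin.cons x y : Fin (n + 1) → EuclideanSpace ℝ (Fin d)) i.castSucc) (y i)))
      ≤ ENNReal.ofReal (alphaConst n) *
          (ENNReal.ofReal (Real.sqrt t) * lambdaQ d q t b) ^ n := by
  classical
  set A := {s : Fin n → ℝ | StrictMono s ∧ ∀ i, s i ∈ Set.Icc 0 t} with hA_def
  set i₀ : Fin n := ⟨0, hn⟩ with hi₀_def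
  -- the bad set is null
  have hnull : (volume : Measure (Fin n → ℝ)) {s : Fin n → ℝ | s i₀ = 0} = 0 := by
    have hset : {s : Fin n → ℝ | s i₀ = (0:ℝ)}
        = Set.pi Set.univ (fun j => if j = i₀ then ({0} : Set ℝ) else Set.univ) := by
      ext s
      simp only [Set.mem_setOf_eq, Set.mem_pi, Set.mem_univ, forall_true_left]
      constructor
      · intro h j
        by_cases hj : j = i₀ <;> simp [hj, h]
      · intro h
        have := h i₀
        simpa using this
    rw [hset, volume_pi, Measure.pi_pi]
    refine Finset.prod_eq_zero (Finset.mem_univ i₀) ?_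
    simp
  -- A and the open simplex agree a.e.
  have hsub : A \ simplexSet n t ⊆ {s : Fin n → ℝ | s i₀ = 0} := by
    rintro s ⟨⟨hsm, hmem⟩, hnot⟩
    have : ∃ i, s i ∉ Set.Ioc 0 t := by
      by_contra hcon
      push_neg at hcon
      exact hnot ⟨hsm, hcon⟩
    obtain ⟨i, hi⟩ := this
    have h1 : 0 ≤ s i := (hmem i).1
    have h2 : s i ≤ t := (hmem i).2
    have h3 : s i = 0 := by
      by_contra h
      exact hi ⟨lt_of_le_of_ne h1 (Ne.symm h), h2⟩
    have h4 : s i₀ ≤ s i := by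
      refine hsm.monotone ?_
      exact Fin.mk_le_of_le_val (Nat.zero_le _)
    have h5 : 0 ≤ s i₀ := (hmem i₀).1
    have : s i₀ = 0 := le_antisymm (h3 ▸ h4) h5
    exact this
  have hae : A =ᵐ[(volume : Measure (Fin n → ℝ))] simplexSet n t := by
    rw [MeasureTheory.ae_eq_set]
    constructor
    · exact measure_mono_null hsub hnull
    · have : simplexSet n t \ A = ∅ := by
        rw [Set.diff_eq_empty]
        rintro s ⟨hsm, hmem⟩
        exact ⟨hsm, fun i => ⟨(hmem i).1.le, (hmem i).2⟩⟩
      rw [this]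
      exact measure_empty
  have hΛ : ∀ z : EuclideanSpace ℝ (Fin d), (∫⁻ s in Set.Ioc (0:ℝ) t,
      ∫⁻ y, ENNReal.ofReal (s ^ (-(1:ℝ)/2) * q s z y * b y)) ≤ lambdaQ d q t b :=
    fun z => le_iSup (fun z : EuclideanSpace ℝ (Fin d) => ∫⁻ s in Set.Ioc (0:ℝ) t,
      ∫⁻ y, ENNReal.ofReal (s ^ (-(1:ℝ)/2) * q s z y * b y)) z
  have hbound := Jfun_bound (q := q) (b := b) hqm hbm (lambdaQ d q t b) hΛ n t ht.le le_rfl x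
  calc (∫⁻ s in A,
        ∫⁻ y : Fin n → EuclideanSpace ℝ (Fin d),
          ∏ i : Fin n,
            ENNReal.ofReal (b (y i) *
              q ((Fin.cons 0 s : Fin (n + 1) → ℝ) i.succ
                  - (Fin.cons 0 s : Fin (n + 1) → ℝ) i.castSucc)
                ((Fin.cons x y : Fin (n + 1) → EuclideanSpace ℝ (Fin d)) i.castSucc) (y i)))
      = ∫⁻ s in simplexSet n t, ∫⁻ y : Fin n → EuclideanSpace ℝ (Fin d), Pfun q b n x s y :=
        setLIntegral_congr hae
    _ = Jfun q b n t x := rfl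
    _ ≤ ENNReal.ofReal (alphaConst n) * ENNReal.ofReal (Real.sqrt t) ^ n
          * lambdaQ d q t b ^ n := hbound
    _ = ENNReal.ofReal (alphaConst n) *
          (ENNReal.ofReal (Real.sqrt t) * lambdaQ d q t b) ^ n := by
        rw [mul_pow, mul_assoc]
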